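/- Let G be a group with a finite generating set A and let Γ = C(G;A) be its right Cayley graph. The group G is non-amenable if and only if there exist constants C > 0 and ε > 0 and a flow f on Γ such that |f(e)| ≤ C for every directed edge e, and the inflow into every vertex is at least ε. -/

import Mathlib

/-- The group element corresponding to a letter `(i, b)`: the generator `A i` itself if
`b = true`, and its inverse if `b = false`. -/
def genOf {G : Type*} [Group G] {ι : Type*} (A : ι → G) : ι × Bool → G :=
  fun s => if s.2 then A s.1 else (A s.1)⁻¹

/-- The inverse of the directed edge `(g, (i, b))` from `g` to `g * genOf A (i, b)`:
it is the edge labelled by the inverse letter `(i, !b)` starting at the terminal vertex. -/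
def edgeInv {G : Type*} [Group G] {ι : Type*} (A : ι → G) (e : G × ι × Bool) :
    G × ι × Bool :=
  (e.1 * genOf A e.2, (e.2.1, !e.2.2))

/-- A flow on the right Cayley graph of `G` with respect to `A`: a real-valued function on
directed edges with `f(e⁻¹) = -f(e)`. -/
def IsFlow {G : Type*} [Group G] {ι : Type*} (A : ι → G) (f : G × ι × Bool → ℝ) : Prop :=
  ∀ e : G × ι × Bool, f (edgeInv A e) = - f e

/-- The inflow into a vertex `v`: the sum of the flow over all directed edges with terminal
vertex `v`; these are exactly the edges `(v * (genOf A s)⁻¹, s)` for letters `s`. -/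
noncomputable def inflow {G : Type*} [Group G] {ι : Type*} [Fintype ι] (A : ι → G)
    (f : G × ι × Bool → ℝ) (v : G) : ℝ :=
  ∑ s : ι × Bool, f (v * (genOf A s)⁻¹, s)

/-- A group is amenable if there is a finitely additive normalized right-invariant mean on
the set of all its subsets. -/
def IsAmenable (G : Type*) [Group G] : Prop :=
  ∃ μ : Set G → ℝ,
    (∀ Z : Set G, 0 ≤ μ Z ∧ μ Z ≤ 1) ∧
    μ Set.univ = 1 ∧
    (∀ Z₁ Z₂ : Set G, Disjoint Z₁ Z₂ → μ (Z₁ ∪ Z₂) = μ Z₁ + μ Z₂) ∧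
    (∀ (Z : Set G) (g : G), μ ((· * g) '' Z) = μ Z)


namespace CayleyFlowAux

variable {G : Type*} [Group G]
set_option linter.unusedSectionVars false

section Integral

variable (μ : Set G → ℝ)

lemma mu_empty (hadd : ∀ Z₁ Z₂ : Set G, Disjoint Z₁ Z₂ → μ (Z₁ ∪ Z₂) = μ Z₁ + μ Z₂) :
    μ ∅ = 0 := by
  have h := hadd ∅ ∅ (by simp)
  simp only [Set.union_empty] at h
  linarith

lemma mu_biUnion (hadd : ∀ Z₁ Z₂ : Set G, Disjoint Z₁ Z₂ → μ (Z₁ ∪ Z₂) = μ Z₁ + μ Z₂)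
    {β : Type*} [DecidableEq β] (t : Finset β) (S : β → Set G)
    (hdisj : ∀ p ∈ t, ∀ q ∈ t, p ≠ q → Disjoint (S p) (S q)) :
    μ (⋃ p ∈ t, S p) = ∑ p ∈ t, μ (S p) := by
  induction t using Finset.induction_on with
  | empty => simpa using mu_empty μ hadd
  | @insert a s ha ih =>
    rw [Finset.sum_insert ha, Finset.set_biUnion_insert]
    rw [hadd _ _ ?_, ih (fun p hp q hq hpq => hdisj p (Finset.mem_insert_of_mem hp)
      q (Finset.mem_insert_of_mem hq) hpq)]
    · exact Set.disjoint_iUnion_right.2 fun p => Set.disjoint_iUnion_right.2 fun hp =>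
        hdisj a (Finset.mem_insert_self a s) p (Finset.mem_insert_of_mem hp)
          (fun h => ha (h ▸ hp))

open Classical in
/-- Integral of a finite-range function against a finitely additive measure. -/
noncomputable def sInt (φ : G → ℝ) : ℝ :=
  if h : (Set.range φ).Finite then ∑ y ∈ h.toFinset, y * μ (φ ⁻¹' {y}) else 0

variable {μ}

lemma sInt_partition (hadd : ∀ Z₁ Z₂ : Set G, Disjoint Z₁ Z₂ → μ (Z₁ ∪ Z₂) = μ Z₁ + μ Z₂)
    {β : Type*} (t : Finset β) (S : β → Set G) (v : β → ℝ)
    (hdisj : ∀ p ∈ t, ∀ q ∈ t, p ≠ q → Disjoint (S p) (S q))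
    (hcover : ∀ x : G, ∃ p ∈ t, x ∈ S p)
    (φ : G → ℝ) (hφ : ∀ p ∈ t, ∀ x ∈ S p, φ x = v p) :
    sInt μ φ = ∑ p ∈ t, v p * μ (S p) := by
  classical
  have hFin : (Set.range φ).Finite := by
    refine Set.Finite.subset (t.finite_toSet.image v) ?_
    rintro y ⟨x, rfl⟩
    obtain ⟨p, hp, hx⟩ := hcover x
    exact ⟨p, hp, (hφ p hp x hx).symm⟩
  rw [sInt, dif_pos hFin]
  set R := hFin.toFinset with hR
  have hmem : ∀ y ∈ R, μ (φ ⁻¹' {y}) = ∑ p ∈ t.filter (fun p => v p = y), μ (S p) := by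
    intro y _
    rw [← mu_biUnion μ hadd _ S (fun p hp q hq hpq =>
      hdisj p (Finset.mem_filter.1 hp).1 q (Finset.mem_filter.1 hq).1 hpq)]
    congr 1
    ext x
    simp only [Set.mem_preimage, Set.mem_singleton_iff, Set.mem_iUnion, Finset.mem_filter]
    constructor
    · intro hxy
      obtain ⟨p, hp, hx⟩ := hcover x
      exact ⟨p, ⟨hp, by rw [← hφ p hp x hx, hxy]⟩, hx⟩
    · rintro ⟨p, ⟨hp, hvp⟩, hx⟩
      rw [hφ p hp x hx, hvp]
  calc ∑ y ∈ R, y * μ (φ ⁻¹' {y})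
      = ∑ y ∈ R, ∑ p ∈ t.filter (fun p => v p = y), v p * μ (S p) := by
        refine Finset.sum_congr rfl fun y hy => ?_
        rw [hmem y hy, Finset.mul_sum]
        refine Finset.sum_congr rfl fun p hp => ?_
        rw [(Finset.mem_filter.1 hp).2]
    _ = ∑ p ∈ t.filter (fun p => v p ∈ R), v p * μ (S p) := by
        rw [← Finset.sum_fiberwise_of_maps_to (fun p hp => (Finset.mem_filter.1 hp).2)]
        refine Finset.sum_congr rfl fun y hy => ?_
        refine Finset.sum_congr ?_ fun _ _ => rfl
        ext p
        simp only [Finset.mem_filter]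
        constructor
        · rintro ⟨hp, hvp⟩
          exact ⟨⟨hp, hvp ▸ hy⟩, hvp⟩
        · rintro ⟨⟨hp, _⟩, hvp⟩
          exact ⟨hp, hvp⟩
    _ = ∑ p ∈ t, v p * μ (S p) := by
        refine Finset.sum_subset (Finset.filter_subset _ _) fun p hp hnp => ?_
        have hSp : S p = ∅ := by
          by_contra hne
          obtain ⟨x, hx⟩ := Set.nonempty_iff_ne_empty.2 hne
          refine hnp (Finset.mem_filter.2 ⟨hp, ?_⟩)
          rw [hR, Set.Finite.mem_toFinset, ← hφ p hp x hx]
          exact ⟨x, rfl⟩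
        rw [hSp, mu_empty μ hadd, mul_zero]

lemma range_add_finite {φ ψ : G → ℝ} (hφ : (Set.range φ).Finite)
    (hψ : (Set.range ψ).Finite) : (Set.range (fun x => φ x + ψ x)).Finite := by
  refine Set.Finite.subset (Set.Finite.image2 (· + ·) hφ hψ) ?_
  rintro y ⟨x, rfl⟩
  exact Set.mem_image2_of_mem ⟨x, rfl⟩ ⟨x, rfl⟩

lemma sInt_add (hadd : ∀ Z₁ Z₂ : Set G, Disjoint Z₁ Z₂ → μ (Z₁ ∪ Z₂) = μ Z₁ + μ Z₂)
    {φ ψ : G → ℝ} (hφ : (Set.range φ).Finite) (hψ : (Set.range ψ).Finite) :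
    sInt μ (fun x => φ x + ψ x) = sInt μ φ + sInt μ ψ := by
  classical
  set t : Finset (ℝ × ℝ) := hφ.toFinset ×ˢ hψ.toFinset with ht
  set S : ℝ × ℝ → Set G := fun p => φ ⁻¹' {p.1} ∩ ψ ⁻¹' {p.2} with hS
  have hdisj : ∀ p ∈ t, ∀ q ∈ t, p ≠ q → Disjoint (S p) (S q) := by
    intro p _ q _ hpq
    rw [Set.disjoint_left]
    rintro x ⟨hx1, hx2⟩ ⟨hy1, hy2⟩
    exact hpq (Prod.ext (by
      simp only [Set.mem_preimage, Set.mem_singleton_iff] at hx1 hy1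
      rw [← hx1, ← hy1]) (by
      simp only [Set.mem_preimage, Set.mem_singleton_iff] at hx2 hy2
      rw [← hx2, ← hy2]))
  have hcover : ∀ x : G, ∃ p ∈ t, x ∈ S p := fun x =>
    ⟨(φ x, ψ x), Finset.mem_product.2 ⟨hφ.mem_toFinset.2 ⟨x, rfl⟩, hψ.mem_toFinset.2 ⟨x, rfl⟩⟩,
      ⟨rfl, rfl⟩⟩
  have h1 := sInt_partition hadd t S (fun p => p.1) hdisj hcover φ
    (fun p _ x hx => hx.1)
  have h2 := sInt_partition hadd t S (fun p => p.2) hdisj hcover ψ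
    (fun p _ x hx => hx.2)
  have h3 := sInt_partition hadd t S (fun p => p.1 + p.2) hdisj hcover
    (fun x => φ x + ψ x) (fun p _ x hx => by
      have e1 : φ x = p.1 := hx.1
      have e2 : ψ x = p.2 := hx.2
      show φ x + ψ x = p.1 + p.2
      rw [e1, e2])
  rw [h1, h2, h3, ← Finset.sum_add_distrib]
  exact Finset.sum_congr rfl fun p _ => by ring

lemma sInt_zero : sInt μ (fun _ : G => (0:ℝ)) = 0 := by
  classical
  have hFin : (Set.range (fun _ : G => (0:ℝ))).Finite :=
    Set.finite_range_const
  rw [sInt, dif_pos hFin]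
  exact Finset.sum_eq_zero fun y _ => by
    have : y = 0 := by
      have := hFin.mem_toFinset.1 ‹y ∈ hFin.toFinset›
      obtain ⟨x, rfl⟩ := this
      rfl
    rw [this, zero_mul]

lemma range_neg_finite {φ : G → ℝ} (hφ : (Set.range φ).Finite) :
    (Set.range (fun x => -φ x)).Finite := by
  refine Set.Finite.subset (hφ.image (fun y => -y)) ?_
  rintro y ⟨x, rfl⟩
  exact ⟨φ x, ⟨x, rfl⟩, rfl⟩

lemma sInt_neg (hadd : ∀ Z₁ Z₂ : Set G, Disjoint Z₁ Z₂ → μ (Z₁ ∪ Z₂) = μ Z₁ + μ Z₂)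
    {φ : G → ℝ} (hφ : (Set.range φ).Finite) :
    sInt μ (fun x => -φ x) = - sInt μ φ := by
  have h := sInt_add hadd hφ (range_neg_finite hφ)
  simp only [add_neg_cancel] at h
  have h0 : sInt μ (fun _ : G => (0:ℝ)) = 0 := sInt_zero
  linarith [h0 ▸ h]

lemma sInt_transl (hinv : ∀ (Z : Set G) (g : G), μ ((· * g) '' Z) = μ Z)
    (c : G) {φ : G → ℝ} (hφ : (Set.range φ).Finite) :
    sInt μ (fun x => φ (x * c)) = sInt μ φ := by
  classical
  have hsub : (Set.range (fun x => φ (x * c))) = Set.range φ := by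
    ext y
    constructor
    · rintro ⟨x, rfl⟩; exact ⟨x * c, rfl⟩
    · rintro ⟨x, rfl⟩
      exact ⟨x * c⁻¹, by show φ (x * c⁻¹ * c) = φ x; rw [inv_mul_cancel_right]⟩
  have hFin' : (Set.range (fun x => φ (x * c))).Finite := hsub ▸ hφ
  rw [sInt, dif_pos hFin', sInt, dif_pos hφ]
  have hT : hFin'.toFinset = hφ.toFinset := by
    ext y; rw [Set.Finite.mem_toFinset, Set.Finite.mem_toFinset, hsub]
  rw [hT]
  refine Finset.sum_congr rfl fun y _ => ?_
  congr 1
  have hpre : (fun x => φ (x * c)) ⁻¹' {y} = (· * c⁻¹) '' (φ ⁻¹' {y}) := by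
    ext x
    simp only [Set.mem_preimage, Set.mem_singleton_iff, Set.mem_image]
    constructor
    · intro hx; exact ⟨x * c, hx, by rw [mul_inv_cancel_right]⟩
    · rintro ⟨z, hz, rfl⟩; rwa [inv_mul_cancel_right]
  rw [hpre, hinv]

lemma sInt_ge (hadd : ∀ Z₁ Z₂ : Set G, Disjoint Z₁ Z₂ → μ (Z₁ ∪ Z₂) = μ Z₁ + μ Z₂)
    (hnn : ∀ Z : Set G, 0 ≤ μ Z) (huniv : μ Set.univ = 1)
    {φ : G → ℝ} (hφ : (Set.range φ).Finite) {c : ℝ} (hc : ∀ x, c ≤ φ x) :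
    c ≤ sInt μ φ := by
  classical
  rw [sInt, dif_pos hφ]
  have hsum : ∑ y ∈ hφ.toFinset, μ (φ ⁻¹' {y}) = μ Set.univ := by
    rw [← mu_biUnion μ hadd hφ.toFinset (fun y => φ ⁻¹' {y}) ?_]
    · congr 1
      ext x
      simp only [Set.mem_iUnion, Set.mem_preimage, Set.mem_singleton_iff, Set.mem_univ,
        iff_true]
      exact ⟨φ x, hφ.mem_toFinset.2 ⟨x, rfl⟩, rfl⟩
    · intro p _ q _ hpq
      rw [Set.disjoint_left]
      rintro x hx1 hx2
      simp only [Set.mem_preimage, Set.mem_singleton_iff] at hx1 hx2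
      exact hpq (hx1 ▸ hx2 ▸ rfl)
  calc c = c * ∑ y ∈ hφ.toFinset, μ (φ ⁻¹' {y}) := by rw [hsum, huniv, mul_one]
    _ = ∑ y ∈ hφ.toFinset, c * μ (φ ⁻¹' {y}) := Finset.mul_sum _ _ _
    _ ≤ ∑ y ∈ hφ.toFinset, y * μ (φ ⁻¹' {y}) := by
        refine Finset.sum_le_sum fun y hy => ?_
        obtain ⟨x, rfl⟩ := hφ.mem_toFinset.1 hy
        exact mul_le_mul_of_nonneg_right (hc x) (hnn _)

lemma range_finsum_finite {α : Type*} (t : Finset α) (φ : α → G → ℝ)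
    (hφ : ∀ s, (Set.range (φ s)).Finite) :
    (Set.range (fun x => ∑ s ∈ t, φ s x)).Finite := by
  classical
  induction t using Finset.induction_on with
  | empty => simpa using Set.finite_range_const
  | @insert b u hb ihu =>
    simp only [Finset.sum_insert hb]
    exact range_add_finite (hφ b) ihu

lemma sInt_finsum (hadd : ∀ Z₁ Z₂ : Set G, Disjoint Z₁ Z₂ → μ (Z₁ ∪ Z₂) = μ Z₁ + μ Z₂)
    {α : Type*} (t : Finset α) (φ : α → G → ℝ)
    (hφ : ∀ s, (Set.range (φ s)).Finite) :
    sInt μ (fun x => ∑ s ∈ t, φ s x) = ∑ s ∈ t, sInt μ (φ s) := by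
  classical
  induction t using Finset.induction_on with
  | empty => simpa using sInt_zero
  | @insert a s ha ih =>
    have hfs : (Set.range (fun x => ∑ s' ∈ s, φ s' x)).Finite :=
      range_finsum_finite s φ hφ
    simp only [Finset.sum_insert ha]
    rw [← ih, ← sInt_add hadd (hφ a) hfs]

end Integral


section Bar

variable {G : Type*} [Group G] {ι : Type*}

/-- The involution on letters swapping a generator with its inverse. -/
def bar (s : ι × Bool) : ι × Bool := (s.1, !s.2)

lemma bar_bar (s : ι × Bool) : bar (bar s) = s := by
  rcases s with ⟨i, b⟩; simp [bar]

lemma bar_bijective : Function.Bijective (bar : ι × Bool → ι × Bool) :=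
  Function.Involutive.bijective bar_bar

lemma genOf_bar (A : ι → G) (s : ι × Bool) : genOf A (bar s) = (genOf A s)⁻¹ := by
  rcases s with ⟨i, b⟩; cases b <;> simp [genOf, bar]

lemma sum_bar [Fintype ι] (F : ι × Bool → ℝ) :
    ∑ s : ι × Bool, F (bar s) = ∑ s : ι × Bool, F s :=
  Fintype.sum_bijective bar bar_bijective _ F (fun _ => rfl)

end Bar

section PartA

variable {G : Type*} [Group G] {ι : Type*} [Fintype ι]

theorem not_amenable_of_flow (A : ι → G) {C ε : ℝ} {f : G × ι × Bool → ℝ}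
    (hε : 0 < ε) (hflow : IsFlow A f) (hbd : ∀ e : G × ι × Bool, |f e| ≤ C)
    (hin : ∀ v : G, ε ≤ inflow A f v) : ¬ IsAmenable G := by
  classical
  rintro ⟨μ, hrng, huniv, hadd, hinv⟩
  have hnn : ∀ Z : Set G, 0 ≤ μ Z := fun Z => (hrng Z).1
  by_cases hι : Nonempty ι
  swap
  · have hie : IsEmpty (ι × Bool) := by
      rw [not_nonempty_iff] at hι
      infer_instance
    have h0 : inflow A f 1 = 0 := by
      rw [inflow]
      exact Finset.sum_of_isEmpty _
    linarith [hin 1]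
  · set n : ℕ := Fintype.card (ι × Bool) with hn
    have hnpos : 0 < n := Fintype.card_pos
    have hnR : (0:ℝ) < n := by exact_mod_cast hnpos
    set δ : ℝ := ε / (2 * n) with hδdef
    have hδ : 0 < δ := div_pos hε (by positivity)
    set g : ι × Bool → G → ℝ := fun s v => f (v, s) with hg
    set r : ι × Bool → G → ℝ := fun s v => δ * (⌊g s v / δ⌋ : ℤ) with hrdef
    have hr_le : ∀ s v, r s v ≤ g s v := by
      intro s v
      have := Int.floor_le (g s v / δ)
      calc r s v = δ * (⌊g s v / δ⌋ : ℤ) := rfl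
        _ ≤ δ * (g s v / δ) := by
            exact mul_le_mul_of_nonneg_left this hδ.le
        _ = g s v := by field_simp
    have hr_gt : ∀ s v, g s v - δ < r s v := by
      intro s v
      have h1 : g s v / δ < (⌊g s v / δ⌋ : ℤ) + 1 := Int.lt_floor_add_one _
      have h2 : g s v < δ * ((⌊g s v / δ⌋ : ℤ) + 1) := by
        have := mul_lt_mul_of_pos_left h1 hδ
        calc g s v = δ * (g s v / δ) := by field_simp
          _ < δ * ((⌊g s v / δ⌋ : ℤ) + 1) := this
      have : δ * ((⌊g s v / δ⌋ : ℤ) + 1) = r s v + δ := by rw [hrdef]; ring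
      linarith [h2, this ▸ h2]
    have hrfin : ∀ s, (Set.range (r s)).Finite := by
      intro s
      refine Set.Finite.subset (((Set.finite_Icc (⌊-C/δ⌋) (⌊C/δ⌋)).image
        (fun k : ℤ => δ * (k:ℝ)))) ?_
      rintro y ⟨v, rfl⟩
      refine ⟨⌊g s v / δ⌋, ?_, rfl⟩
      have hb := hbd (v, s)
      have hb1 : -C ≤ g s v := by
        have := abs_le.1 hb
        exact this.1
      have hb2 : g s v ≤ C := (abs_le.1 hb).2
      constructor
      · exact Int.floor_le_floor ((div_le_div_iff_of_pos_right hδ).2 hb1)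
      · exact Int.floor_le_floor ((div_le_div_iff_of_pos_right hδ).2 hb2)
    have hpt : ∀ (v : G) (s : ι × Bool), f (v * (genOf A s)⁻¹, s) = - f (v, bar s) := by
      intro v s
      have h := hflow (v * (genOf A s)⁻¹, s)
      rw [edgeInv] at h
      simp only at h
      rw [inv_mul_cancel_right] at h
      rw [show bar s = (s.1, !s.2) from rfl]
      linarith [h]
    have hkey1 : ∀ v, inflow A f v = - ∑ s : ι × Bool, f (v, s) := by
      intro v
      rw [inflow]
      calc ∑ s : ι × Bool, f (v * (genOf A s)⁻¹, s)
          = ∑ s : ι × Bool, - f (v, bar s) := Finset.sum_congr rfl fun s _ => hpt v s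
        _ = - ∑ s : ι × Bool, f (v, bar s) := by rw [Finset.sum_neg_distrib]
        _ = - ∑ s : ι × Bool, f (v, s) := by rw [sum_bar (fun s => f (v, s))]
    set w' : G → ℝ := fun v => ∑ s : ι × Bool, r s (v * (genOf A s)⁻¹) with hw'
    set u : G → ℝ := fun v => ∑ s : ι × Bool, r s v with hu
    have hτfin : ∀ s : ι × Bool, (Set.range (fun v => r s (v * (genOf A s)⁻¹))).Finite :=
      fun s => Set.Finite.subset (hrfin s) (by rintro y ⟨v, rfl⟩; exact ⟨_, rfl⟩)
    have hw'fin : (Set.range w').Finite :=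
      range_finsum_finite Finset.univ _ hτfin
    have hufin : (Set.range u).Finite := range_finsum_finite Finset.univ _ hrfin
    have hIw' : sInt μ w' = sInt μ u := by
      rw [hw', hu, sInt_finsum hadd Finset.univ _ hτfin,
        sInt_finsum hadd Finset.univ _ hrfin]
      exact Finset.sum_congr rfl fun s _ => sInt_transl hinv _ (hrfin s)
    have hnδ : (n : ℝ) * δ = ε / 2 := by
      rw [hδdef]
      field_simp
    have hw'lb : ∀ v, ε / 2 ≤ w' v := by
      intro v
      have h1 : ∑ s : ι × Bool, (g s (v * (genOf A s)⁻¹) - δ) ≤ w' v := by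
        refine Finset.sum_le_sum fun s _ => (hr_gt s _).le
      have h2 : ∑ s : ι × Bool, (g s (v * (genOf A s)⁻¹) - δ)
          = inflow A f v - n * δ := by
        rw [Finset.sum_sub_distrib, Finset.sum_const, inflow]
        simp [hn, nsmul_eq_mul]
        rfl
      have := hin v
      rw [h2] at h1
      rw [hnδ] at h1
      linarith
    have hulb : ∀ v, u v ≤ -ε := by
      intro v
      have h1 : u v ≤ ∑ s : ι × Bool, g s v := Finset.sum_le_sum fun s _ => hr_le s v
      have h2 : ∑ s : ι × Bool, g s v = - inflow A f v := by
        rw [hkey1 v]; simp [hg]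
      have := hin v
      rw [h2] at h1
      linarith
    have hI1 : ε / 2 ≤ sInt μ w' := sInt_ge hadd hnn huniv hw'fin hw'lb
    have hI2 : ε ≤ sInt μ (fun v => - u v) :=
      sInt_ge hadd hnn huniv (range_neg_finite hufin) (fun v => by
        have := hulb v; simp only [le_neg]; linarith)
    rw [sInt_neg hadd hufin] at hI2
    rw [hIw'] at hI1
    linarith

end PartA

section PartB

variable {G : Type*} [Group G] {ι : Type*} [Fintype ι]

/-- The submodule of bounded real functions on `G`. -/
def Bdd (G : Type*) [Group G] : Submodule ℝ (G → ℝ) where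
  carrier := {h | ∃ M : ℝ, ∀ x, |h x| ≤ M}
  add_mem' := by
    rintro a b ⟨M, hM⟩ ⟨N, hN⟩
    exact ⟨M + N, fun x => (abs_add_le _ _).trans (add_le_add (hM x) (hN x))⟩
  zero_mem' := ⟨0, fun x => by simp⟩
  smul_mem' := by
    rintro c a ⟨M, hM⟩
    refine ⟨|c| * M, fun x => ?_⟩
    rw [Pi.smul_apply, smul_eq_mul, abs_mul]
    exact mul_le_mul_of_nonneg_left (hM x) (abs_nonneg c)

/-- Right translation as a linear map on bounded functions. -/
def transl (c : G) : Bdd G →ₗ[ℝ] Bdd G where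
  toFun h := ⟨fun x => (h : G → ℝ) (x * c), by
    obtain ⟨M, hM⟩ := h.2
    exact ⟨M, fun x => hM _⟩⟩
  map_add' h k := rfl
  map_smul' c h := rfl

lemma transl_apply (c : G) (h : Bdd G) (x : G) :
    ((transl c h : Bdd G) : G → ℝ) x = (h : G → ℝ) (x * c) := rfl

/-- The linear map sending a family of bounded functions `H` to
`∑ s, (translate of H s by genOf A s) - H s`. -/
noncomputable def phiMap (A : ι → G) : ((ι × Bool) → Bdd G) →ₗ[ℝ] Bdd G :=
  ∑ s : ι × Bool, (transl (genOf A s) - LinearMap.id).comp (LinearMap.proj s)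

lemma phiMap_apply (A : ι → G) (H : (ι × Bool) → Bdd G) (v : G) :
    ((phiMap A H : Bdd G) : G → ℝ) v
      = ∑ s : ι × Bool, ((H s : G → ℝ) (v * genOf A s) - (H s : G → ℝ) v) := by
  rw [phiMap, LinearMap.sum_apply]
  simp only [AddSubmonoidClass.coe_finset_sum, Finset.sum_apply]
  rfl

noncomputable def bsup (h : Bdd G) : ℝ := sSup (Set.range ((h : G → ℝ)))

lemma bddAbove_range_bdd (h : Bdd G) : BddAbove (Set.range ((h : G → ℝ))) := by
  obtain ⟨M, hM⟩ := h.2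
  exact ⟨M, by rintro y ⟨x, rfl⟩; exact (abs_le.1 (hM x)).2⟩

lemma le_bsup (h : Bdd G) (x : G) : (h : G → ℝ) x ≤ bsup h :=
  le_csSup (bddAbove_range_bdd h) ⟨x, rfl⟩

lemma bsup_le {h : Bdd G} {a : ℝ} (H : ∀ x, (h : G → ℝ) x ≤ a) : bsup h ≤ a :=
  csSup_le (Set.range_nonempty _) (by rintro y ⟨x, rfl⟩; exact H x)

lemma bsup_smul {c : ℝ} (hc : 0 < c) (h : Bdd G) : bsup (c • h) = c * bsup h := by
  apply le_antisymm
  · refine bsup_le fun x => ?_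
    have : ((c • h : Bdd G) : G → ℝ) x = c * (h : G → ℝ) x := rfl
    rw [this]
    exact mul_le_mul_of_nonneg_left (le_bsup h x) hc.le
  · rw [mul_comm, ← le_div_iff₀ hc]
    refine bsup_le fun x => ?_
    rw [le_div_iff₀ hc, mul_comm]
    exact le_bsup (c • h) x


/-- The bounded indicator function of a set. -/
noncomputable def ind (Z : Set G) : Bdd G :=
  ⟨Set.indicator Z (fun _ => (1:ℝ)), 1, fun x => by
    by_cases hx : x ∈ Z <;> simp [hx]⟩

theorem amenable_of_no_flow (A : ι → G) (hA : Subgroup.closure (Set.range A) = ⊤)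
    (hW0 : ∀ H : (ι × Bool) → Bdd G, 0 ≤ bsup (phiMap A H)) : IsAmenable G := by
  classical
  haveI : Nonempty G := ⟨1⟩
  set W : Submodule ℝ (Bdd G) := LinearMap.range (phiMap A) with hWdef
  have hW : ∀ w ∈ W, 0 ≤ bsup w := by
    rintro w ⟨H, rfl⟩
    exact hW0 H
  set N : Bdd G → ℝ := fun h => sInf (Set.range fun w : W => bsup (h + (w : Bdd G))) with hN
  have hne : ∀ h : Bdd G, (Set.range fun w : W => bsup (h + (w : Bdd G))).Nonempty :=
    fun h => ⟨bsup (h + ((0:W) : Bdd G)), ⟨0, rfl⟩⟩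
  have hbddb : ∀ h : Bdd G, BddBelow (Set.range fun w : W => bsup (h + (w : Bdd G))) := by
    intro h
    obtain ⟨M, hM⟩ := h.2
    refine ⟨-M, ?_⟩
    rintro y ⟨w, rfl⟩
    have h1 : bsup (w : Bdd G) ≤ bsup (h + (w : Bdd G)) + M := by
      refine bsup_le fun x => ?_
      have : ((w : Bdd G) : G → ℝ) x
          = ((h + (w : Bdd G) : Bdd G) : G → ℝ) x - (h : G → ℝ) x := by
        show _ = (h : G → ℝ) x + _ - _
        ring
      rw [this]
      have := le_bsup (h + (w : Bdd G)) x
      have := (abs_le.1 (hM x)).1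
      linarith
    have h2 := hW w w.2
    linarith
  have hNle : ∀ (h : Bdd G) (w : Bdd G), w ∈ W → N h ≤ bsup (h + w) := by
    intro h w hw
    exact csInf_le (hbddb h) ⟨⟨w, hw⟩, rfl⟩
  have hNle0 : ∀ h : Bdd G, N h ≤ bsup h := by
    intro h
    have := hNle h 0 (zero_mem W)
    simpa using this
  have hNge : ∀ (h : Bdd G) (c : ℝ), (∀ w : Bdd G, w ∈ W → c ≤ bsup (h + w)) → c ≤ N h := by
    intro h c hc
    refine le_csInf (hne h) ?_
    rintro y ⟨w, rfl⟩
    exact hc w w.2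
  have N_add : ∀ x y : Bdd G, N (x + y) ≤ N x + N y := by
    intro x y
    have key : ∀ w₁ ∈ W, ∀ w₂ ∈ W, N (x + y) ≤ bsup (x + w₁) + bsup (y + w₂) := by
      intro w₁ hw₁ w₂ hw₂
      have h1 : N (x + y) ≤ bsup (x + y + (w₁ + w₂)) :=
        hNle _ _ (add_mem hw₁ hw₂)
      refine h1.trans (bsup_le fun v => ?_)
      have e : ((x + y + (w₁ + w₂) : Bdd G) : G → ℝ) v
          = ((x + w₁ : Bdd G) : G → ℝ) v + ((y + w₂ : Bdd G) : G → ℝ) v := by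
        show (x : G → ℝ) v + (y : G → ℝ) v + ((w₁ : G → ℝ) v + (w₂ : G → ℝ) v) = _
        show _ = (x : G → ℝ) v + (w₁ : G → ℝ) v + ((y : G → ℝ) v + (w₂ : G → ℝ) v)
        ring
      rw [e]
      exact add_le_add (le_bsup _ v) (le_bsup _ v)
    have step1 : ∀ w₁ ∈ W, N (x + y) - bsup (x + w₁) ≤ N y := by
      intro w₁ hw₁
      refine hNge y _ fun w₂ hw₂ => ?_
      have := key w₁ hw₁ w₂ hw₂
      linarith
    have step2 : N (x + y) - N y ≤ N x := by
      refine hNge x _ fun w₁ hw₁ => ?_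
      have := step1 w₁ hw₁
      linarith
    linarith
  have N_hom : ∀ c : ℝ, 0 < c → ∀ h : Bdd G, N (c • h) = c * N h := by
    intro c hc h
    apply le_antisymm
    · have hle : c⁻¹ * N (c • h) ≤ N h := by
        refine hNge h _ fun w hw => ?_
        have h1 : N (c • h) ≤ bsup (c • h + c • w) := hNle _ _ (Submodule.smul_mem W c hw)
        have h2 : c • h + c • w = c • (h + w) := by rw [smul_add]
        rw [h2, bsup_smul hc] at h1
        rw [inv_mul_le_iff₀ hc]
        linarith
      calc N (c • h) = c * (c⁻¹ * N (c • h)) := by field_simp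
        _ ≤ c * N h := by exact mul_le_mul_of_nonneg_left hle hc.le
    · refine hNge (c • h) _ fun w hw => ?_
      have h2 : c • h + w = c • (h + c⁻¹ • w) := by
        rw [smul_add, smul_smul]
        field_simp
        rw [one_smul]
      have h1 : N h ≤ bsup (h + c⁻¹ • w) := hNle _ _ (Submodule.smul_mem W c⁻¹ hw)
      rw [h2, bsup_smul hc]
      exact mul_le_mul_of_nonneg_left h1 hc.le
  have hN0 : ∀ x : ((0 : Bdd G →ₗ[ℝ] ℝ).toPMap ⊥).domain,
      ((0 : Bdd G →ₗ[ℝ] ℝ).toPMap ⊥) x ≤ N ↑x := by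
    rintro ⟨x, hx⟩
    have hx0 : x = 0 := by simpa [LinearMap.toPMap] using hx
    have happ : ((0 : Bdd G →ₗ[ℝ] ℝ).toPMap ⊥) ⟨x, hx⟩ = 0 := rfl
    rw [happ]
    show (0:ℝ) ≤ N x
    rw [hx0]
    refine hNge 0 0 fun w hw => ?_
    rw [zero_add]
    exact hW w hw
  obtain ⟨gl, -, hgle⟩ :=
    exists_extension_of_le_sublinear ((0 : Bdd G →ₗ[ℝ] ℝ).toPMap ⊥) N N_hom N_add hN0
  have hgsup : ∀ h : Bdd G, gl h ≤ bsup h := fun h => (hgle h).trans (hNle0 h)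
  -- the constant one function
  set one : Bdd G := ⟨fun _ => (1:ℝ), 1, fun x => by simp⟩ with hone_def
  have hone : gl one = 1 := by
    have h1 : gl one ≤ 1 := (hgsup one).trans (bsup_le fun x => le_refl 1)
    have h2 : gl (-one) ≤ -1 := by
      refine (hgsup (-one)).trans (bsup_le fun x => ?_)
      show -(1:ℝ) ≤ -1
      exact le_refl _
    rw [map_neg] at h2
    linarith
  have hvanish : ∀ w : Bdd G, w ∈ W → gl w = 0 := by
    intro w hw
    have key : ∀ u : Bdd G, u ∈ W → gl u ≤ 0 := by
      intro u hu
      have h1 : gl u ≤ N u := hgle u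
      have h2 : N u ≤ bsup (u + (-u)) := hNle _ _ (neg_mem hu)
      have h3 : bsup (u + (-u) : Bdd G) ≤ 0 := by
        refine bsup_le fun x => ?_
        show (u : G → ℝ) x + (-(u : G → ℝ) x) ≤ 0
        ring_nf
        exact le_refl _
      linarith
    have ha := key w hw
    have hb := key (-w) (neg_mem hw)
    rw [map_neg] at hb
    linarith
  -- translation invariance of gl
  have htransl : ∀ γ : G, ∀ h : Bdd G, gl (transl γ h) = gl h := by
    have hmem : ∀ γ : G, γ ∈ Subgroup.closure (Set.range A) := by
      intro γ
      rw [hA]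
      exact Subgroup.mem_top γ
    intro γ
    refine Subgroup.closure_induction (k := Set.range A)
      (p := fun g _ => ∀ h : Bdd G, gl (transl g h) = gl h) ?_ ?_ ?_ ?_ (hmem γ)
    · rintro x ⟨i, rfl⟩ h
      have hWmem : transl (A i) h - h ∈ W := by
        refine ⟨Pi.single (i, true) h, ?_⟩
        apply Subtype.ext
        funext v
        rw [phiMap_apply]
        rw [Finset.sum_eq_single (i, true)]
        · have : genOf A (i, true) = A i := by simp [genOf]
          rw [Pi.single_eq_same, this]
          rfl
        · intro s _ hs
          rw [Pi.single_eq_of_ne hs]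
          show (0:ℝ) - 0 = 0
          ring
        · intro hmem'
          exact absurd (Finset.mem_univ _) hmem'
      have := hvanish _ hWmem
      rw [map_sub] at this
      linarith
    · intro h
      have : transl (1:G) h = h := by
        apply Subtype.ext; funext v; show (h : G → ℝ) (v * 1) = (h : G → ℝ) v
        rw [mul_one]
      rw [this]
    · intro x y _ _ hx hy h
      have : transl (x * y) h = transl x (transl y h) := by
        apply Subtype.ext; funext v
        show (h : G → ℝ) (v * (x * y)) = (h : G → ℝ) (v * x * y)
        rw [mul_assoc]
      rw [this, hx, hy]
    · intro x _ hx h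
      have : transl x (transl x⁻¹ h) = h := by
        apply Subtype.ext; funext v
        show (h : G → ℝ) (v * x * x⁻¹) = (h : G → ℝ) v
        rw [mul_inv_cancel_right]
      calc gl (transl x⁻¹ h) = gl (transl x (transl x⁻¹ h)) := (hx _).symm
        _ = gl h := by rw [this]
  -- the mean
  refine ⟨fun Z => gl (ind Z), ?_, ?_, ?_, ?_⟩
  · intro Z
    constructor
    · have h1 : gl (-(ind Z)) ≤ 0 := by
        refine (hgsup _).trans (bsup_le fun x => ?_)
        show -(Set.indicator Z (fun _ => (1:ℝ)) x) ≤ 0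
        by_cases hx : x ∈ Z <;> simp [hx]
      rw [map_neg] at h1
      linarith
    · refine (hgsup _).trans (bsup_le fun x => ?_)
      show Set.indicator Z (fun _ => (1:ℝ)) x ≤ 1
      by_cases hx : x ∈ Z <;> simp [hx]
  · show gl (ind (Set.univ : Set G)) = 1
    have : ind (Set.univ : Set G) = one := by
      apply Subtype.ext; funext x
      show Set.indicator Set.univ (fun _ => (1:ℝ)) x = 1
      simp
    rw [this, hone]
  · intro Z₁ Z₂ hdisj
    show gl (ind (Z₁ ∪ Z₂)) = gl (ind Z₁) + gl (ind Z₂)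
    have : ind (Z₁ ∪ Z₂) = ind Z₁ + ind Z₂ := by
      apply Subtype.ext; funext x
      show Set.indicator (Z₁ ∪ Z₂) (fun _ => (1:ℝ)) x
        = Set.indicator Z₁ (fun _ => (1:ℝ)) x + Set.indicator Z₂ (fun _ => (1:ℝ)) x
      rw [Set.indicator_union_of_disjoint hdisj]
    rw [this, map_add]
  · intro Z γ
    show gl (ind ((· * γ) '' Z)) = gl (ind Z)
    have : ind ((· * γ) '' Z) = transl γ⁻¹ (ind Z) := by
      apply Subtype.ext; funext x
      show Set.indicator ((· * γ) '' Z) (fun _ => (1:ℝ)) x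
        = Set.indicator Z (fun _ => (1:ℝ)) (x * γ⁻¹)
      by_cases hx : x * γ⁻¹ ∈ Z
      · have hx2 : x ∈ (· * γ) '' Z := ⟨x * γ⁻¹, hx, by group⟩
        simp [hx, hx2]
      · have hx2 : x ∉ (· * γ) '' Z := by
          rintro ⟨z, hz, rfl⟩
          apply hx
          have : z * γ * γ⁻¹ = z := by group
          rwa [this]
        simp [hx, hx2]
    rw [this, htransl]

theorem exists_flow_of_neg (A : ι → G) (H : (ι × Bool) → Bdd G)
    (hneg : bsup (phiMap A H) < 0) :
    ∃ (C ε : ℝ), 0 < C ∧ 0 < ε ∧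
      ∃ f : G × ι × Bool → ℝ, IsFlow A f ∧
        (∀ e : G × ι × Bool, |f e| ≤ C) ∧
        (∀ v : G, ε ≤ inflow A f v) := by
  classical
  haveI : Nonempty G := ⟨1⟩
  set h : (ι × Bool) → G → ℝ := fun s => -((H (bar s) : G → ℝ)) with hh
  set f : G × ι × Bool → ℝ := fun e => h e.2 e.1 - h (bar e.2) (e.1 * genOf A e.2) with hf
  set M : (ι × Bool) → ℝ := fun s => Classical.choose (H s).2 with hM
  have hMspec : ∀ s x, |(H s : G → ℝ) x| ≤ M s := fun s => Classical.choose_spec (H s).2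
  have hMnn : ∀ s, 0 ≤ M s := fun s => (abs_nonneg _).trans (hMspec s 1)
  set C : ℝ := (∑ s : ι × Bool, M s) + 1 with hC
  have hCpos : 0 < C := by
    have : 0 ≤ ∑ s : ι × Bool, M s := Finset.sum_nonneg fun s _ => hMnn s
    linarith
  set ε : ℝ := - bsup (phiMap A H) with hε
  have hεpos : 0 < ε := by rw [hε]; linarith
  refine ⟨C, ε, hCpos, hεpos, f, ?_, ?_, ?_⟩
  · rintro ⟨v, s⟩
    show h (bar s) (v * genOf A s)
        - h (bar (bar s)) (v * genOf A s * genOf A (bar s)) = _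
    rw [bar_bar, genOf_bar, mul_inv_cancel_right]
    show _ = -(h s v - h (bar s) (v * genOf A s))
    ring
  · rintro ⟨v, s⟩
    have h1 : |h s v| ≤ M (bar s) := by
      rw [hh]
      simpa using hMspec (bar s) v
    have h2 : |h (bar s) (v * genOf A s)| ≤ M s := by
      have e : h (bar s) = -((H (bar (bar s)) : G → ℝ)) := rfl
      rw [e, bar_bar]
      simpa using hMspec s (v * genOf A s)
    have hsub : M (bar s) + M s ≤ ∑ s' : ι × Bool, M s' := by
      have hne : s ≠ bar s := by
        rcases s with ⟨i, b⟩
        simp [bar]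
      have : ∑ s' ∈ ({bar s, s} : Finset (ι × Bool)), M s'
          ≤ ∑ s' : ι × Bool, M s' := by
        refine Finset.sum_le_sum_of_subset_of_nonneg (Finset.subset_univ _)
          (fun s' _ _ => hMnn s')
      rwa [Finset.sum_pair (Ne.symm hne)] at this
    have := abs_sub (h s v) (h (bar s) (v * genOf A s))
    calc |f (v, s)| = |h s v - h (bar s) (v * genOf A s)| := rfl
      _ ≤ |h s v| + |h (bar s) (v * genOf A s)| := abs_sub _ _
      _ ≤ M (bar s) + M s := add_le_add h1 h2
      _ ≤ ∑ s' : ι × Bool, M s' := hsub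
      _ ≤ C := by rw [hC]; linarith
  · intro v
    have key : inflow A f v = - ((phiMap A H : Bdd G) : G → ℝ) v := by
      rw [inflow, phiMap_apply]
      have e1 : ∀ s : ι × Bool, f (v * (genOf A s)⁻¹, s)
          = h s (v * (genOf A s)⁻¹) - h (bar s) v := by
        intro s
        show h s (v * (genOf A s)⁻¹) - h (bar s) (v * (genOf A s)⁻¹ * genOf A s) = _
        rw [inv_mul_cancel_right]
      have e2 : ∑ s : ι × Bool, h s (v * (genOf A s)⁻¹)
          = ∑ s : ι × Bool, h (bar s) (v * genOf A s) := by
        have := sum_bar (ι := ι) (fun s => h s (v * (genOf A s)⁻¹))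
        rw [← this]
        refine Finset.sum_congr rfl fun s _ => ?_
        rw [genOf_bar, inv_inv]
      calc ∑ s : ι × Bool, f (v * (genOf A s)⁻¹, s)
          = ∑ s : ι × Bool, (h s (v * (genOf A s)⁻¹) - h (bar s) v) :=
            Finset.sum_congr rfl fun s _ => e1 s
        _ = ∑ s : ι × Bool, h s (v * (genOf A s)⁻¹)
            - ∑ s : ι × Bool, h (bar s) v := Finset.sum_sub_distrib _ _
        _ = ∑ s : ι × Bool, h (bar s) (v * genOf A s)
            - ∑ s : ι × Bool, h (bar s) v := by rw [e2]
        _ = ∑ s : ι × Bool, (h (bar s) (v * genOf A s) - h (bar s) v) :=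
            (Finset.sum_sub_distrib _ _).symm
        _ = - ∑ s : ι × Bool, ((H s : G → ℝ) (v * genOf A s) - (H s : G → ℝ) v) := by
            rw [← Finset.sum_neg_distrib]
            refine Finset.sum_congr rfl fun s _ => ?_
            rw [hh]
            simp only [bar_bar, Pi.neg_apply]
            ring
    rw [key]
    have := le_bsup (phiMap A H) v
    rw [hε]
    linarith

end PartB
end CayleyFlowAux

/-- Let `G` be a group with a finite generating set `A` and let
`Γ = C(G; A)` be its right Cayley graph. The group `G` is non-amenable if and only if there
exist constants `C > 0` and `ε > 0` and a flow `f` on `Γ` such that `|f(e)| ≤ C` for every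
directed edge `e`, and the inflow into every vertex is at least `ε`. -/
theorem not_amenable_iff_exists_flow {G : Type*} [Group G]
    {ι : Type*} [Fintype ι] (A : ι → G)
    (hA : Subgroup.closure (Set.range A) = ⊤) :
    ¬ IsAmenable G ↔
      ∃ (C ε : ℝ), 0 < C ∧ 0 < ε ∧
        ∃ f : G × ι × Bool → ℝ, IsFlow A f ∧
          (∀ e : G × ι × Bool, |f e| ≤ C) ∧
          (∀ v : G, ε ≤ inflow A f v) := by

  constructor
  · intro hnA
    by_contra hno
    refine hnA (CayleyFlowAux.amenable_of_no_flow A hA ?_)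
    intro H
    by_contra hlt
    push_neg at hlt
    exact hno (CayleyFlowAux.exists_flow_of_neg A H hlt)
  · rintro ⟨C, ε, hC, hε, f, hflow, hbd, hin⟩
    exact CayleyFlowAux.not_amenable_of_flow A hε hflow hbd hin
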